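/- Let h ≥ 3, let ρ be the h-regular relation on E_k determined by an h-regular family T = {θ_1,…,θ_m} of equivalence relations on E_k, and let θ be a nontrivial equivalence relation on E_k. Then ρ is θ-closed if and only if θ ⊆ θ_i for all 1 ≤ i ≤ m. -/

import Mathlib

/-- A finitary operation on `Fin k`: a pair of an arity `n` and a function
`(Fin n → Fin k) → Fin k`. -/
abbrev Ops (k : ℕ) := Σ n : ℕ, ((Fin n → Fin k) → Fin k)

/-- The set of finitary operations preserving a binary relation `θ` on `Fin k`. -/
def PolB {k : ℕ} (θ : Set (Fin k × Fin k)) : Set (Ops k) :=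
  {f | ∀ a b : Fin f.1 → Fin k, (∀ i, (a i, b i) ∈ θ) → (f.2 a, f.2 b) ∈ θ}

/-- The set of finitary operations preserving an `h`-ary relation `ρ` on `Fin k`. -/
def PolH {k h : ℕ} (ρ : Set (Fin h → Fin k)) : Set (Ops k) :=
  {f | ∀ M : Fin h → Fin f.1 → Fin k,
    (∀ i, (fun j => M j i) ∈ ρ) → (fun j => f.2 (M j)) ∈ ρ}

/-- A clone: contains all projections and is closed under composition. -/
def IsClone {k : ℕ} (C : Set (Ops k)) : Prop :=
  (∀ (n : ℕ) (i : Fin n), (⟨n, fun x => x i⟩ : Ops k) ∈ C) ∧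
  (∀ (n m : ℕ) (f : (Fin n → Fin k) → Fin k) (g : Fin n → (Fin m → Fin k) → Fin k),
    (⟨n, f⟩ : Ops k) ∈ C → (∀ i, (⟨m, g i⟩ : Ops k) ∈ C) →
    (⟨m, fun x => f fun i => g i x⟩ : Ops k) ∈ C)

/-- `C` is maximal in `D`: `C ⊊ D` and no clone lies strictly between them. -/
def MaximalIn {k : ℕ} (C D : Set (Ops k)) : Prop :=
  C ⊂ D ∧ ∀ F : Set (Ops k), IsClone F → ¬(C ⊂ F ∧ F ⊂ D)

/-- `θ` is an equivalence relation (as a set of pairs). -/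
def IsEquivRel {A : Type*} (θ : Set (A × A)) : Prop :=
  (∀ a, (a, a) ∈ θ) ∧ (∀ a b, (a, b) ∈ θ → (b, a) ∈ θ) ∧
    (∀ a b c, (a, b) ∈ θ → (b, c) ∈ θ → (a, c) ∈ θ)

/-- The diagonal relation `Δ` on `Fin k`. -/
def diag (k : ℕ) : Set (Fin k × Fin k) := {p | p.1 = p.2}

/-- A nontrivial equivalence relation: `Δ ⊊ θ ⊊ (Fin k)²`. -/
def NontrivEquiv {k : ℕ} (θ : Set (Fin k × Fin k)) : Prop :=
  IsEquivRel θ ∧ diag k ⊂ θ ∧ θ ⊂ Set.univ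

/-- Relational composition `α ∘ β = {(a,c) : ∃ b, (a,b) ∈ α ∧ (b,c) ∈ β}`. -/
def relComp {k : ℕ} (α β : Set (Fin k × Fin k)) : Set (Fin k × Fin k) :=
  {p | ∃ b, (p.1, b) ∈ α ∧ (b, p.2) ∈ β}

/-- The set of equivalence classes of `θ`. -/
def classesOf {A : Type*} (θ : Set (A × A)) : Set (Set A) :=
  {S | ∃ a : A, S = {b | (a, b) ∈ θ}}

/-- Totally reflexive: every tuple with a repeated entry is in `ρ`. -/
def TotallyReflexive {k h : ℕ} (ρ : Set (Fin h → Fin k)) : Prop :=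
  ∀ v : Fin h → Fin k, (∃ i j : Fin h, i ≠ j ∧ v i = v j) → v ∈ ρ

/-- Totally symmetric: closed under all permutations of coordinates. -/
def TotallySymmetric {k h : ℕ} (ρ : Set (Fin h → Fin k)) : Prop :=
  ∀ (v : Fin h → Fin k) (σ : Equiv.Perm (Fin h)), v ∈ ρ → v ∘ ⇑σ ∈ ρ

/-- The center of an `h`-ary relation: elements `a` such that every tuple whose
first coordinate is `a` lies in `ρ`. -/
def center {k h : ℕ} (ρ : Set (Fin h → Fin k)) : Set (Fin k) :=
  {a | ∀ v : Fin h → Fin k, (∀ i : Fin h, (i : ℕ) = 0 → v i = a) → v ∈ ρ}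

/-- An `h`-ary central relation. -/
def IsCentralRel {k h : ℕ} (ρ : Set (Fin h → Fin k)) : Prop :=
  ρ ≠ Set.univ ∧ TotallyReflexive ρ ∧ TotallySymmetric ρ ∧ (center ρ).Nonempty

/-- `η = {(u₁,…,u_h) : (u₁,u₂) ∈ θ}` (0-indexed: first two coordinates θ-related). -/
def eta {k : ℕ} (h : ℕ) (θ : Set (Fin k × Fin k)) : Set (Fin h → Fin k) :=
  {v | ∀ i j : Fin h, (i : ℕ) = 0 → (j : ℕ) = 1 → (v i, v j) ∈ θ}

/-- `ρ_{l,θ}`: tuples whose coordinates from position `l` onwards can be moved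
inside their θ-classes so as to land in `ρ` (0-indexed coordinates). -/
def rhoTh {k h : ℕ} (l : ℕ) (θ : Set (Fin k × Fin k)) (ρ : Set (Fin h → Fin k)) :
    Set (Fin h → Fin k) :=
  {a | ∃ u : Fin h → Fin k, (∀ j : Fin h, l ≤ (j : ℕ) → (u j, a j) ∈ θ) ∧
    (fun j : Fin h => if (j : ℕ) < l then a j else u j) ∈ ρ}

/-- `ρ` is θ-closed: `ρ = ρ_{0,θ}`. -/
def ThetaClosed {k h : ℕ} (θ : Set (Fin k × Fin k)) (ρ : Set (Fin h → Fin k)) : Prop :=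
  ρ = rhoTh 0 θ ρ

/-- `γ_σ = {(a_{σ(1)},…,a_{σ(h)}) : a ∈ γ}`. -/
def permuted {k h : ℕ} (σ : Equiv.Perm (Fin h)) (γ : Set (Fin h → Fin k)) :
    Set (Fin h → Fin k) :=
  {w | w ∘ ⇑σ.symm ∈ γ}

/-- A transversal of order `l` for the θ-classes: a system of representatives
(pairwise θ-unrelated, meeting every class) such that every tuple whose
coordinates from position `l` onwards lie in `T` belongs to `ρ`. -/
def IsTransversal {k h : ℕ} (θ : Set (Fin k × Fin k)) (ρ : Set (Fin h → Fin k)) (l : ℕ)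
    (T : Set (Fin k)) : Prop :=
  (∀ u ∈ T, ∀ v ∈ T, u ≠ v → (u, v) ∉ θ) ∧
  (∀ a : Fin k, ∃ u ∈ T, (a, u) ∈ θ) ∧
  (∀ w : Fin h → Fin k, (∀ j : Fin h, l ≤ (j : ℕ) → w j ∈ T) → w ∈ ρ)

/-- `ρ` is weakly θ-closed of order `l` (`1 ≤ l ≤ h-1`). -/
def WeaklyThetaClosed {k h : ℕ} (θ : Set (Fin k × Fin k)) (ρ : Set (Fin h → Fin k))
    (l : ℕ) : Prop :=
  1 ≤ l ∧ l ≤ h - 1 ∧ (∃ T : Set (Fin k), IsTransversal θ ρ (l - 1) T) ∧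
  ρ = ⋂ σ : Equiv.Perm (Fin h), permuted σ (rhoTh l θ ρ)

/-- Type I: `η ⊆ ρ` and every θ-class contains a central element of `ρ`. -/
def TypeI {k h : ℕ} (θ : Set (Fin k × Fin k)) (ρ : Set (Fin h → Fin k)) : Prop :=
  eta h θ ⊆ ρ ∧ ∀ a : Fin k, ∃ c : Fin k, (a, c) ∈ θ ∧ c ∈ center ρ

/-- Type II: `ρ` is θ-closed. -/
def TypeII {k h : ℕ} (θ : Set (Fin k × Fin k)) (ρ : Set (Fin h → Fin k)) : Prop :=
  ThetaClosed θ ρ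

/-- Type III: `ρ` is weakly θ-closed of some order and `η ⊆ ρ`. -/
def TypeIII {k h : ℕ} (θ : Set (Fin k × Fin k)) (ρ : Set (Fin h → Fin k)) : Prop :=
  (∃ l : ℕ, WeaklyThetaClosed θ ρ l) ∧ eta h θ ⊆ ρ

/-- `τ` is a diagonal relation through `θ`. -/
def IsDiagonal {k h : ℕ} (θ : Set (Fin k × Fin k)) (τ : Set (Fin h → Fin k)) : Prop :=
  ∃ (ε₁ : Setoid (Fin h)) (ε₂ : Set (Fin h × Fin h)),
    (∀ p ∈ ε₂, (∀ j, ε₁.r p.1 j → p.1 ≤ j) ∧ (∀ j, ε₁.r p.2 j → p.2 ≤ j)) ∧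
    (∀ i : Fin h, (∀ j, ε₁.r i j → i ≤ j) → (i, i) ∈ ε₂) ∧
    (∀ i j, (i, j) ∈ ε₂ → (j, i) ∈ ε₂) ∧
    (∀ i j l, (i, j) ∈ ε₂ → (j, l) ∈ ε₂ → (i, l) ∈ ε₂) ∧
    τ = {a | (∀ i j, ε₁.r i j → a i = a j) ∧ (∀ i j, (i, j) ∈ ε₂ → (a i, a j) ∈ θ)}

/-- `ρ^l_{0,θ}`: `l`-tuples which can be moved inside their θ-classes so that
every `h`-tuple with all entries among the moved elements lies in `ρ`. -/
def rhoPow {k h : ℕ} (l : ℕ) (θ : Set (Fin k × Fin k)) (ρ : Set (Fin h → Fin k)) :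
    Set (Fin l → Fin k) :=
  {u | ∃ e : Fin l → Fin k, (∀ i, (e i, u i) ∈ θ) ∧
    ∀ w : Fin h → Fin k, (∀ j, ∃ i, w j = e i) → w ∈ ρ}

/-- An `h`-regular family of equivalence relations. -/
def IsHRegFamily {A : Type*} (h : ℕ) {m : ℕ} (T : Fin m → Set (A × A)) : Prop :=
  (∀ i, IsEquivRel (T i)) ∧
  (∀ i, (classesOf (T i)).ncard = h) ∧
  (∀ x : Fin m → A, (⋂ i, {b | (x i, b) ∈ T i}).Nonempty)

/-- The `h`-regular relation determined by the family `T`: tuples whose set of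
components meets at most `h-1` classes of each member of the family. -/
def hRegRel {A : Type*} (h : ℕ) {m : ℕ} (T : Fin m → Set (A × A)) : Set (Fin h → A) :=
  {a | ∀ i : Fin m, {S ∈ classesOf (T i) | ∃ j : Fin h, a j ∈ S}.ncard ≤ h - 1}

/-- `ρ` is an `h`-regular relation: determined by some `h`-regular family. -/
def IsHRegularRel {A : Type*} (h : ℕ) (ρ : Set (Fin h → A)) : Prop :=
  ∃ m : ℕ, 1 ≤ m ∧ ∃ T : Fin m → Set (A × A), IsHRegFamily h T ∧ ρ = hRegRel h T

namespace Stmt17Aux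

/-- The θ-class of `x`. -/
def cls {k : ℕ} (θ : Set (Fin k × Fin k)) (x : Fin k) : Set (Fin k) := {y | (x, y) ∈ θ}

lemma cls_eq {k : ℕ} {θ : Set (Fin k × Fin k)} (hθ : IsEquivRel θ) {x y : Fin k}
    (hxy : (x, y) ∈ θ) : cls θ x = cls θ y := by
  ext z
  exact ⟨fun hz => hθ.2.2 _ _ _ (hθ.2.1 _ _ hxy) hz, fun hz => hθ.2.2 _ _ _ hxy hz⟩

lemma cls_mem_classesOf {k : ℕ} (θ : Set (Fin k × Fin k)) (x : Fin k) :
    cls θ x ∈ classesOf θ := ⟨x, rfl⟩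

lemma met_eq_range {k h : ℕ} {θ : Set (Fin k × Fin k)} (hθ : IsEquivRel θ)
    (a : Fin h → Fin k) :
    {S ∈ classesOf θ | ∃ j : Fin h, a j ∈ S} = Set.range (fun j => cls θ (a j)) := by
  ext S
  constructor
  · rintro ⟨⟨x, rfl⟩, j, hj⟩
    exact ⟨j, (cls_eq hθ hj).symm⟩
  · rintro ⟨j, rfl⟩
    exact ⟨⟨a j, rfl⟩, j, hθ.1 _⟩

end Stmt17Aux

open Stmt17Aux

/-- For `h ≥ 3`, the `h`-regular relation `ρ` determined by an `h`-regular
family `T = {θ₁,…,θ_m}` is θ-closed iff `θ ⊆ θᵢ` for all `i`. -/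
theorem stmt17 (k h m : ℕ) (hh : 3 ≤ h) (hm : 1 ≤ m)
    (T : Fin m → Set (Fin k × Fin k)) (hT : IsHRegFamily h T)
    (θ : Set (Fin k × Fin k)) (hθ : NontrivEquiv θ) :
    ThetaClosed θ (hRegRel h T) ↔ ∀ i : Fin m, θ ⊆ T i := by
  have hEq : ∀ i, IsEquivRel (T i) := hT.1
  constructor
  · -- θ-closed → θ ⊆ Tᵢ
    intro hclosed i
    by_contra hns
    rw [Set.not_subset] at hns
    obtain ⟨⟨b, c⟩, hpθ, hpT⟩ := hns
    -- a transversal `f` of the classes of `T i`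
    have hcard : Nat.card (classesOf (T i)) = h := by
      rw [Nat.card_coe_set_eq]; exact hT.2.1 i
    let e : classesOf (T i) ≃ Fin h := Finite.equivFinOfCardEq hcard
    have hrep : ∀ j : Fin h, ∃ x : Fin k,
        cls (T i) x = ((e.symm j : classesOf (T i)) : Set (Fin k)) := by
      intro j
      obtain ⟨x, hx⟩ := (e.symm j).2
      exact ⟨x, hx.symm⟩
    choose f hf using hrep
    have finj : ∀ j1 j2 : Fin h, cls (T i) (f j1) = cls (T i) (f j2) → j1 = j2 := by
      intro j1 j2 hcl
      have h1 : ((e.symm j1 : classesOf (T i)) : Set (Fin k)) = (e.symm j2 : classesOf (T i)) := by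
        rw [← hf j1, ← hf j2, hcl]
      have h2 := Subtype.coe_injective h1
      simpa using congrArg e h2
    have fsurj : ∀ x : Fin k, ∃ j : Fin h, cls (T i) (f j) = cls (T i) x := by
      intro x
      refine ⟨e ⟨cls (T i) x, cls_mem_classesOf _ _⟩, ?_⟩
      rw [hf]
      simp
    obtain ⟨pb, hpb⟩ := fsurj b
    obtain ⟨pc, hpc⟩ := fsurj c
    have hbc : cls (T i) b ≠ cls (T i) c := by
      intro hcl
      apply hpT
      have hc : c ∈ cls (T i) c := (hEq i).1 c
      rw [← hcl] at hc
      exact hc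
    have hpbc : pb ≠ pc := by
      intro hcl; exact hbc (by rw [← hpb, ← hpc, hcl])
    set w : Fin h → Fin k := fun j => if j = pb ∨ j = pc then b else f j with hw_def
    set w' : Fin h → Fin k := fun j => if j = pc then c else w j with hw'_def
    have hwpb : w pb = b := if_pos (Or.inl rfl)
    have hwpc : w pc = b := if_pos (Or.inr rfl)
    have hwo : ∀ j, j ≠ pb → j ≠ pc → w j = f j := by
      intro j h1 h2
      exact if_neg (by tauto)
    have hw'pb : w' pb = b := by rw [hw'_def]; simp only [if_neg hpbc]; exact hwpb
    have hw'pc : w' pc = c := if_pos rfl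
    have hw'o : ∀ j, j ≠ pb → j ≠ pc → w' j = f j := by
      intro j h1 h2
      rw [hw'_def]; simp only [if_neg h2]; exact hwo j h1 h2
    -- w ∈ ρ
    have hw : w ∈ hRegRel h T := by
      intro i'
      rw [met_eq_range (hEq i')]
      by_cases hii : i' = i
      · subst hii
        have hsub2 : Set.range (fun j => cls (T i') (w j)) ⊆
            classesOf (T i') \ {cls (T i') (f pc)} := by
          rintro S ⟨j, rfl⟩
          refine ⟨cls_mem_classesOf _ _, ?_⟩
          simp only [Set.mem_singleton_iff]
          intro hcl
          by_cases hj : j = pb ∨ j = pc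
          · have hwj : w j = b := if_pos hj
            rw [hwj] at hcl
            exact hpbc (finj pb pc (by rw [hpb, hcl]))
          · push_neg at hj
            rw [hwo j hj.1 hj.2] at hcl
            exact hj.2 (finj j pc hcl)
        calc (Set.range fun j => cls (T i') (w j)).ncard
            ≤ (classesOf (T i') \ {cls (T i') (f pc)}).ncard :=
              Set.ncard_le_ncard hsub2 (Set.toFinite _)
          _ = (classesOf (T i')).ncard - 1 :=
              Set.ncard_diff_singleton_of_mem (cls_mem_classesOf _ _)
          _ = h - 1 := by rw [hT.2.1 i']
      · have hsub2 : Set.range (fun j => cls (T i') (w j)) ⊆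
            (fun j => cls (T i') (w j)) '' {pc}ᶜ := by
          rintro S ⟨j, rfl⟩
          rcases eq_or_ne j pc with hj | hj
          · refine ⟨pb, hpbc, ?_⟩
            show cls (T i') (w pb) = cls (T i') (w j)
            rw [hj, hwpb, hwpc]
          · exact ⟨j, hj, rfl⟩
        have h1 : ({pc}ᶜ : Set (Fin h)).ncard = h - 1 := by
          have h2 := Set.ncard_add_ncard_compl ({pc} : Set (Fin h))
          rw [Set.ncard_singleton] at h2
          have h3 : Nat.card (Fin h) = h := by simp
          omega
        calc (Set.range fun j => cls (T i') (w j)).ncard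
            ≤ ((fun j => cls (T i') (w j)) '' {pc}ᶜ).ncard :=
              Set.ncard_le_ncard hsub2 (Set.toFinite _)
          _ ≤ ({pc}ᶜ : Set (Fin h)).ncard := Set.ncard_image_le (Set.toFinite _)
          _ = h - 1 := h1
    -- w' ∈ ρ by θ-closedness
    have hclosed' : hRegRel h T = rhoTh 0 θ (hRegRel h T) := hclosed
    have hw' : w' ∈ hRegRel h T := by
      rw [hclosed']
      refine ⟨w, fun j _ => ?_, ?_⟩
      · by_cases hj : j = pc
        · subst hj; rw [hwpc, hw'pc]; exact hpθ
        · rw [show w' j = w j from if_neg hj]; exact hθ.1.1 _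
      · have heq : (fun j : Fin h => if (j : ℕ) < 0 then w' j else w j) = w := by
          funext j; simp
        rw [heq]; exact hw
    -- but w' meets all h classes of T i
    have hfull : Set.range (fun j => cls (T i) (w' j)) = classesOf (T i) := by
      apply Set.Subset.antisymm
      · rintro S ⟨j, rfl⟩; exact cls_mem_classesOf _ _
      · rintro S ⟨x, rfl⟩
        show cls (T i) x ∈ _
        obtain ⟨j, hj⟩ := fsurj x
        rcases eq_or_ne j pc with h1 | h1
        · refine ⟨pc, ?_⟩
          show cls (T i) (w' pc) = cls (T i) x
          rw [hw'pc, ← hpc, ← h1, hj]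
        · rcases eq_or_ne j pb with h2 | h2
          · refine ⟨pb, ?_⟩
            show cls (T i) (w' pb) = cls (T i) x
            rw [hw'pb, ← hpb, ← h2, hj]
          · refine ⟨j, ?_⟩
            show cls (T i) (w' j) = cls (T i) x
            rw [hw'o j h2 h1, hj]
    have hfin := hw' i
    rw [met_eq_range (hEq i), hfull, hT.2.1 i] at hfin
    omega
  · -- θ ⊆ Tᵢ → θ-closed
    intro hsub
    show hRegRel h T = rhoTh 0 θ (hRegRel h T)
    apply Set.Subset.antisymm
    · intro a ha
      refine ⟨a, fun j _ => hθ.1.1 _, ?_⟩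
      have heq : (fun j : Fin h => if (j : ℕ) < 0 then a j else a j) = a := by
        funext j; simp
      rw [heq]; exact ha
    · rintro a ⟨u, hu1, hu2⟩
      have hu2' : u ∈ hRegRel h T := by
        have heq : (fun j : Fin h => if (j : ℕ) < 0 then a j else u j) = u := by
          funext j; simp
        rwa [heq] at hu2
      intro i
      rw [met_eq_range (hEq i)]
      have hsub2 : Set.range (fun j => cls (T i) (a j)) ⊆
          Set.range (fun j => cls (T i) (u j)) := by
        rintro S ⟨j, rfl⟩
        exact ⟨j, cls_eq (hEq i) (hsub i (hu1 j (Nat.zero_le _)))⟩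
      calc (Set.range fun j => cls (T i) (a j)).ncard
          ≤ (Set.range fun j => cls (T i) (u j)).ncard :=
            Set.ncard_le_ncard hsub2 (Set.toFinite _)
        _ ≤ h - 1 := by rw [← met_eq_range (hEq i)]; exact hu2' i
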